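/- arXiv:1812.06050 — 3 statements merged into one kernel-verified Lean document; each statement's English description precedes it below -/
import Mathlib

section
/- Perfect security of the quantum one-time pad: for every complex matrix M indexed by I = (Fin n → ZMod 2) with Trace M = 1, (1/4^n) • ∑_{a,b : I} (X^a * Z^b) * M * (X^a * Z^b)ᴴ = (1/2^n) • 1, i.e., averaging the QOTP encryption over all 2^{2n} keys maps every density matrix to the totally mixed state I/2^n. -/
open Matrix BigOperators

/-- The inner product `a ⊙ b = ∑ i, a i * b i` in `ZMod 2`. -/
def bdot {n : ℕ} (a b : Fin n → ZMod 2) : ZMod 2 := ∑ i, a i * b i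

/-- `χ(a,b) = (-1)^(a ⊙ b)` as a complex number. -/
noncomputable def chi {n : ℕ} (a b : Fin n → ZMod 2) : ℂ :=
  if bdot a b = 1 then -1 else 1

/-- The `n`-qubit Pauli string `X^a`: `|v⟩ ↦ |v ⊕ a⟩`. -/
noncomputable def PX {n : ℕ} (a : Fin n → ZMod 2) :
    Matrix (Fin n → ZMod 2) (Fin n → ZMod 2) ℂ :=
  fun u v => if u = v + a then 1 else 0

/-- The `n`-qubit Pauli string `Z^b`: `|v⟩ ↦ (-1)^(b ⊙ v) |v⟩`. -/
noncomputable def PZ {n : ℕ} (b : Fin n → ZMod 2) :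
    Matrix (Fin n → ZMod 2) (Fin n → ZMod 2) ℂ :=
  fun u v => if u = v then chi b v else 0

noncomputable def sgn : ZMod 2 → ℂ := fun x => if x = 1 then -1 else 1

lemma sgn_add (x y : ZMod 2) : sgn (x + y) = sgn x * sgn y := by
  rcases (by decide : ∀ z : ZMod 2, z = 0 ∨ z = 1) x with rfl | rfl <;>
    rcases (by decide : ∀ z : ZMod 2, z = 0 ∨ z = 1) y with rfl | rfl <;>
    simp (config := {decide := true}) [sgn]

lemma sgn_sum {ι : Type*} (s : Finset ι) (g : ι → ZMod 2) :
    sgn (∑ i ∈ s, g i) = ∏ i ∈ s, sgn (g i) := by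
  classical
  induction s using Finset.induction with
  | empty => simp [sgn]
  | insert _ _ h ih => rw [Finset.sum_insert h, Finset.prod_insert h, sgn_add, ih]

lemma chi_eq (n : ℕ) (b c : Fin n → ZMod 2) : chi b c = sgn (bdot b c) := by
  simp [chi, sgn]

lemma chi_mul (n : ℕ) (b x y : Fin n → ZMod 2) :
    chi b x * chi b y = chi b (x + y) := by
  rw [chi_eq, chi_eq, chi_eq, ← sgn_add]
  congr 1
  simp [bdot, ← Finset.sum_add_distrib, mul_add]

lemma chi_sum (n : ℕ) (c : Fin n → ZMod 2) :
    ∑ b : Fin n → ZMod 2, chi b c = if c = 0 then (2 : ℂ) ^ n else 0 := by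
  classical
  have h1 : ∀ b : Fin n → ZMod 2, chi b c = ∏ i, sgn (b i * c i) := by
    intro b; rw [chi_eq, bdot, sgn_sum]
  simp only [h1]
  rw [← Fintype.prod_sum (fun (i : Fin n) (x : ZMod 2) => sgn (x * c i))]
  have h2 : ∀ i : Fin n, (∑ x : ZMod 2, sgn (x * c i)) = if c i = 0 then 2 else 0 := by
    intro i
    have huniv : (Finset.univ : Finset (ZMod 2)) = {0, 1} := by decide
    rw [huniv]
    rcases (by decide : ∀ z : ZMod 2, z = 0 ∨ z = 1) (c i) with h | h <;>
      simp [h, sgn] <;> norm_num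
  simp only [h2]
  by_cases hc : c = 0
  · subst hc; simp
  · rw [if_neg hc]
    obtain ⟨j, hj⟩ : ∃ j, c j ≠ 0 := by
      by_contra h; push_neg at h; exact hc (funext h)
    exact Finset.prod_eq_zero (Finset.mem_univ j) (by simp [hj])

lemma add_add_self {n : ℕ} (x a : Fin n → ZMod 2) : x + a + a = x := by
  funext i
  show x i + a i + a i = x i
  rw [add_assoc]
  rcases (by decide : ∀ z : ZMod 2, z = 0 ∨ z = 1) (a i) with h | h <;> simp [h] <;> decide

lemma eq_add_iff {n : ℕ} (u w a : Fin n → ZMod 2) : u = w + a ↔ w = u + a := by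
  constructor <;> rintro rfl <;> rw [add_add_self]

lemma conj_entry {n : ℕ} (a b u v : Fin n → ZMod 2)
    (M : Matrix (Fin n → ZMod 2) (Fin n → ZMod 2) ℂ) :
    ((PX a * PZ b) * M * (PX a * PZ b)ᴴ) u v
      = chi b (u + a) * chi b (v + a) * M (u + a) (v + a) := by
  have hA : (PX a * PZ b) = Matrix.of fun u w => if w = u + a then chi b w else 0 := by
    ext u w
    simp only [Matrix.mul_apply, PX, PZ, Matrix.of_apply]
    rw [Finset.sum_eq_single w]
    · simp [eq_add_iff]
    · intro x _ hx; simp [hx, Ne.symm hx]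
    · simp
  have hconj : ∀ (x : Fin n → ZMod 2), (starRingEnd ℂ) (chi b x) = chi b x := by
    intro x; simp [chi]; split <;> simp
  rw [hA]
  simp only [Matrix.mul_apply, Matrix.conjTranspose_apply, Matrix.of_apply]
  rw [Finset.sum_eq_single (v + a)]
  · rw [Finset.sum_eq_single (u + a)]
    · simp [hconj]; ring
    · intro x _ hx; simp [hx]
    · simp
  · intro x _ hx
    simp [hx]
  · simp

lemma qotp_add_eq_zero_iff {n : ℕ} (u v : Fin n → ZMod 2) : u + v = 0 ↔ u = v := by
  constructor
  · intro h
    have h2 : u + v + v = 0 + v := by rw [h]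
    rwa [add_add_self, zero_add] at h2
  · rintro rfl
    funext i
    show u i + u i = 0
    rcases (by decide : ∀ z : ZMod 2, z = 0 ∨ z = 1) (u i) with h | h <;> rw [h] <;> decide

lemma add_four {n : ℕ} (u v a : Fin n → ZMod 2) : u + a + (v + a) = u + v := by
  have : u + a + (v + a) = u + v + a + a := by ring
  rw [this, add_add_self]

theorem qotp_perfect_security (n : ℕ)
    (M : Matrix (Fin n → ZMod 2) (Fin n → ZMod 2) ℂ) (hM : M.trace = 1) :
    ((4 : ℂ) ^ n)⁻¹ • ∑ a : Fin n → ZMod 2, ∑ b : Fin n → ZMod 2,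
        (PX a * PZ b) * M * (PX a * PZ b)ᴴ =
      ((2 : ℂ) ^ n)⁻¹ • (1 : Matrix (Fin n → ZMod 2) (Fin n → ZMod 2) ℂ) := by
  ext u v
  simp only [Matrix.smul_apply, Matrix.sum_apply, smul_eq_mul]
  have key : ∀ a : Fin n → ZMod 2,
      ∑ b : Fin n → ZMod 2, ((PX a * PZ b) * M * (PX a * PZ b)ᴴ) u v
        = (if u = v then (2:ℂ)^n else 0) * M (u + a) (v + a) := by
    intro a
    simp only [conj_entry]
    rw [← Finset.sum_mul]
    congr 1
    simp only [chi_mul, add_four, chi_sum]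
    simp only [qotp_add_eq_zero_iff]
  simp only [key]
  by_cases huv : u = v
  · subst huv
    rw [if_pos rfl, ← Finset.mul_sum]
    have htr : ∑ a : Fin n → ZMod 2, M (u + a) (u + a) = M.trace := by
      rw [Matrix.trace]
      exact Equiv.sum_comp (Equiv.addLeft u) (fun w => M w w)
    rw [htr, hM, mul_one, Matrix.one_apply_eq]
    rw [show (4:ℂ) = 2 * 2 by norm_num, mul_pow, mul_inv]
    field_simp
  · simp [huv, Matrix.one_apply, huv]
end

section
/- Let Ψ : (Fin n → ZMod 2) → ℂ be the n-fold tensor power of (|0⟩ + i|1⟩)/√2, i.e. Ψ u = (2^n)^{-1/2} · i^{wt(u)}, where wt(u) is the number of indices i with u i = 1. Then for every c : Fin n → ZMod 2, (X^c * Z^c).mulVec Ψ = (-i)^{wt(c)} • Ψ; that is, Ψ is an eigenvector of every X^c Z^c with a unimodular eigenvalue. (Key fact in the proof of Proposition 1.) -/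
open Matrix BigOperators

/-- Hamming weight of a bit string. -/
def wt {n : ℕ} (u : Fin n → ZMod 2) : ℕ :=
  (Finset.univ.filter fun i => u i = 1).card

noncomputable def neg1 (x : ZMod 2) : ℂ := if x = 1 then -1 else 1

lemma zmod2_cases (x : ZMod 2) : x = 0 ∨ x = 1 := by revert x; decide

lemma neg1_add (x y : ZMod 2) : neg1 (x + y) = neg1 x * neg1 y := by
  rcases zmod2_cases x with h | h <;> rcases zmod2_cases y with h' | h' <;>
    subst h <;> subst h' <;> simp [neg1]

lemma neg1_sum {ι : Type*} (s : Finset ι) (f : ι → ZMod 2) :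
    neg1 (∑ i ∈ s, f i) = ∏ i ∈ s, neg1 (f i) := by
  classical
  induction s using Finset.induction_on with
  | empty => simp [neg1]
  | insert _ _ h ih => simp [Finset.sum_insert h, Finset.prod_insert h, neg1_add, ih]

lemma chi_prod {n : ℕ} (a b : Fin n → ZMod 2) :
    chi a b = ∏ i, neg1 (a i * b i) := by
  rw [chi, bdot, ← neg1_sum, neg1]

lemma pow_wt {n : ℕ} (z : ℂ) (u : Fin n → ZMod 2) :
    z ^ wt u = ∏ i, (if u i = 1 then z else 1) := by
  rw [wt, ← Finset.prod_const, Finset.prod_filter]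

theorem psi_eigenvector (n : ℕ) (c : Fin n → ZMod 2) :
    (PX c * PZ c).mulVec
        (fun u => (Real.sqrt (2 ^ n) : ℂ)⁻¹ * Complex.I ^ wt u) =
      (-Complex.I) ^ wt c •
        (fun u => (Real.sqrt (2 ^ n) : ℂ)⁻¹ * Complex.I ^ wt u) := by
  funext u
  have hcc : c + c = 0 := by
    funext i
    show c i + c i = 0
    rcases zmod2_cases (c i) with h | h <;> rw [h] <;> decide
  have key : ∀ v : Fin n → ZMod 2, (u = v + c) ↔ (v = u + c) := by
    intro v
    constructor
    · rintro rfl; rw [add_assoc, hcc, add_zero]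
    · rintro rfl; rw [add_assoc, hcc, add_zero]
  simp only [mulVec, dotProduct, Matrix.mul_apply, PX, PZ, Pi.smul_apply, smul_eq_mul,
    ite_mul, mul_ite, one_mul, zero_mul, mul_zero, Finset.sum_ite_eq', Finset.mem_univ,
    if_true, key, Finset.sum_ite_eq]
  rw [chi_prod, pow_wt Complex.I (u + c), pow_wt Complex.I u, pow_wt (-Complex.I) c,
    ← mul_assoc, mul_comm _ ((Real.sqrt (2 ^ n) : ℂ)⁻¹), mul_assoc,
    ← mul_assoc ((∏ i, (if c i = 1 then -Complex.I else 1))),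
    mul_comm ((∏ i, (if c i = 1 then -Complex.I else 1))) ((Real.sqrt (2 ^ n) : ℂ)⁻¹),
    mul_assoc]
  congr 1
  rw [← Finset.prod_mul_distrib, ← Finset.prod_mul_distrib]
  apply Finset.prod_congr rfl
  intro i _
  show neg1 (c i * ((u + c) i)) * _ = _
  have hadd : (u + c) i = u i + c i := rfl
  rcases zmod2_cases (c i) with h | h <;> rcases zmod2_cases (u i) with h' | h' <;>
    simp [neg1, hadd, h, h']
end

section
/- Core of Proposition 1 (the scheme [[p_c = 1/2^n, X^c Z^c]] is not IND-secure), part 2: let E₀ = e₀ e₀ᴴ be the rank-one projector onto the standard basis vector at the all-zero string (the state |0⟩^{⊗n}). Then (1/2^n) • ∑_{c : Fin n → ZMod 2} (X^c * Z^c) * E₀ * (X^c * Z^c)ᴴ = (1/2^n) • 1; i.e., the ciphertext of |0^n⟩⟨0^n| averaged over all keys c is the totally mixed state. Combined with part 1, an adversary measuring in the basis containing Ψ distinguishes the two averaged ciphertexts with probability 1 versus 1/2^n. -/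
open Matrix BigOperators

/-- The projector `|0^n⟩⟨0^n|` onto the all-zero basis state. -/
noncomputable def E₀ (n : ℕ) :
    Matrix (Fin n → ZMod 2) (Fin n → ZMod 2) ℂ :=
  fun u v => (if u = 0 then 1 else 0) * (starRingEnd ℂ) (if v = 0 then 1 else 0)

lemma PXZ_eq {n : ℕ} (c : Fin n → ZMod 2) :
    (PX c * PZ c) = fun u v => if u = v + c then chi c v else 0 := by
  ext u v
  simp [Matrix.mul_apply, PX, PZ]

lemma chi_zero {n : ℕ} (c : Fin n → ZMod 2) : chi c 0 = 1 := by
  simp [chi, bdot]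

lemma term_apply {n : ℕ} (c u v : Fin n → ZMod 2) :
    ((PX c * PZ c) * E₀ n * (PX c * PZ c)ᴴ) u v =
      if u = c ∧ v = c then 1 else 0 := by
  rw [PXZ_eq]
  change ((Matrix.of fun u v => if u = v + c then chi c v else 0) * E₀ n *
    (Matrix.of fun u v => if u = v + c then chi c v else 0)ᴴ) u v = _
  simp only [Matrix.mul_apply, Matrix.conjTranspose_apply, E₀, Matrix.of_apply]
  have step1 : ∀ x : Fin n → ZMod 2,
      (∑ j : Fin n → ZMod 2, (if u = j + c then chi c j else 0) *
        ((if j = 0 then (1:ℂ) else 0) * (starRingEnd ℂ) (if x = 0 then 1 else 0)))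
      = (if u = c then 1 else 0) * (if x = 0 then 1 else 0) := by
    intro x
    rw [Finset.sum_eq_single (0 : Fin n → ZMod 2)]
    · by_cases hx : x = 0 <;> by_cases hu : u = c <;>
        simp [hx, hu, chi_zero, zero_add]
    · intro b _ hb; simp [hb]
    · simp
  simp only [step1]
  rw [Finset.sum_eq_single (0 : Fin n → ZMod 2)]
  · by_cases hu : u = c <;> by_cases hv : v = c <;>
      simp [hu, hv, chi_zero, zero_add]
  · intro b _ hb; simp [hb]
  · simp

theorem xz_scheme_randomizes_zero_state (n : ℕ) :
    ((2 : ℂ) ^ n)⁻¹ • ∑ c : Fin n → ZMod 2,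
        (PX c * PZ c) * E₀ n * (PX c * PZ c)ᴴ =
      ((2 : ℂ) ^ n)⁻¹ • (1 : Matrix (Fin n → ZMod 2) (Fin n → ZMod 2) ℂ) := by
  congr 1
  ext u v
  simp only [Matrix.sum_apply, term_apply, Matrix.one_apply]
  rw [Finset.sum_eq_single u]
  · by_cases h : u = v <;> simp [h, eq_comm]
  · intro b _ hb
    by_cases h : u = b <;> simp [h, hb.symm] <;> tauto
  · simp
end
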